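/- arXiv:1509.06592 — 3 statements merged into one kernel-verified Lean document; each statement's English description precedes it below -/
import Mathlib

section
/- Let w_x, w_y, w_z : ℝ → ℝ be given functions and let ξ : ℝ → ℂ be differentiable with ξ(t) ≠ 0 for every t, satisfying for every t the complex Riccati equation ξ'(t) = ((w_y(t) + i·w_x(t))/2)·ξ(t)² − i·w_z(t)·ξ(t) + (w_y(t) − i·w_x(t))/2. Then the function η : ℝ → ℂ defined by η(t) = −(conj ξ(t))⁻¹ is differentiable and satisfies the same Riccati equation: for every t, η'(t) = ((w_y(t) + i·w_x(t))/2)·η(t)² − i·w_z(t)·η(t) + (w_y(t) − i·w_x(t))/2. -/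
/-- If `ξ : ℝ → ℂ` is differentiable, nonvanishing, and satisfies the complex Riccati
equation (2.5), then `η = -(conj ξ)⁻¹` is differentiable and satisfies the same
Riccati equation. -/
theorem riccati_conjugate_inverse_solution
    (wx wy wz : ℝ → ℝ) (ξ : ℝ → ℂ)
    (hξdiff : Differentiable ℝ ξ)
    (hξne : ∀ t, ξ t ≠ 0)
    (hξric : ∀ t, deriv ξ t =
      (((wy t : ℂ) + Complex.I * (wx t : ℂ)) / 2) * (ξ t) ^ 2
        - Complex.I * (wz t : ℂ) * ξ t
        + ((wy t : ℂ) - Complex.I * (wx t : ℂ)) / 2)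
    (η : ℝ → ℂ)
    (hη : ∀ t, η t = -((starRingEnd ℂ) (ξ t))⁻¹) :
    Differentiable ℝ η ∧ ∀ t, deriv η t =
      (((wy t : ℂ) + Complex.I * (wx t : ℂ)) / 2) * (η t) ^ 2
        - Complex.I * (wz t : ℂ) * η t
        + ((wy t : ℂ) - Complex.I * (wx t : ℂ)) / 2 := by
  have hηfun : η = fun t => -(star (ξ t))⁻¹ := by
    funext t; exact hη t
  have hsne : ∀ t, star (ξ t) ≠ 0 := fun t => star_ne_zero.mpr (hξne t)
  have hderiv : ∀ t, HasDerivAt η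
      (star (deriv ξ t) / (star (ξ t)) ^ 2) t := by
    intro t
    have h1 : HasDerivAt (fun s => star (ξ s)) (star (deriv ξ t)) t :=
      (hξdiff t).hasDerivAt.star
    have h2 := ((hasDerivAt_inv (hsne t)).comp t h1).neg
    rw [hηfun]
    convert h2 using 1
    · rfl
    · rfl
    rw [neg_mul, neg_neg, div_eq_inv_mul]
  constructor
  · exact fun t => (hderiv t).differentiableAt
  · intro t
    rw [(hderiv t).deriv, hξric t, hη t]
    have h := hsne t
    simp only [Complex.star_def, map_add, map_sub, map_mul, map_div₀, map_pow,
      map_ofNat, Complex.conj_I, Complex.conj_ofReal]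
    have h' : (starRingEnd ℂ) (ξ t) ≠ 0 := h
    set c := (starRingEnd ℂ) (ξ t) with hc
    rw [div_eq_iff (pow_ne_zero 2 h'), neg_sq, inv_pow]
    have k : c⁻¹ * c = 1 := inv_mul_cancel₀ h'
    have k2 : (c ^ 2)⁻¹ * c ^ 2 = 1 := inv_mul_cancel₀ (pow_ne_zero 2 h')
    linear_combination ((↑(wy t) + Complex.I * ↑(wx t)) / 2) * k2 +
      Complex.I * ↑(wz t) * c ^ 2 * k
      - ((↑(wy t) + Complex.I * ↑(wx t)) * (c⁻¹ * c + 1)) * k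
      - Complex.I * ↑(wz t) * (c + c ^ 2) * k
end

section
/- Let w_x, w_y, w_z : ℝ → ℝ be given, let γ be a real constant, and let a, b : ℝ → ℝ be differentiable functions satisfying for every t the real system a' = (w_y/2)·a² − (w_x·b)·a − (w_y/2)·(b² − 1) + w_z·b and b' = −(w_x/2)·b² + (w_y·a)·b + (w_x/2)·(a² − 1) − w_z·a. Define U = −γ·2a/(1 + a² + b²), V = −γ·2b/(1 + a² + b²), W = γ·(1 − (a² + b²))/(1 + a² + b²). Then U, V, W are differentiable and satisfy at every t the linear system U' = V·w_z − W·w_y, V' = W·w_x − U·w_z, W' = U·w_y − V·w_x. -/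
/-- If `(a, b)` solve the real system (3.5), then the components `U, V, W` defined by
(3.3) with a real constant `γ` are differentiable and solve the linear system (2.2). -/
theorem velocity_components_solve_linear_system
    (wx wy wz : ℝ → ℝ) (γ : ℝ) (a b : ℝ → ℝ)
    (ha : Differentiable ℝ a) (hb : Differentiable ℝ b)
    (hsys : ∀ t,
      deriv a t = (wy t / 2) * (a t) ^ 2 - (wx t * b t) * a t
          - (wy t / 2) * ((b t) ^ 2 - 1) + wz t * b t ∧
      deriv b t = -(wx t / 2) * (b t) ^ 2 + (wy t * a t) * b t
          + (wx t / 2) * ((a t) ^ 2 - 1) - wz t * a t)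
    (U V W : ℝ → ℝ)
    (hU : ∀ t, U t = -γ * (2 * a t / (1 + (a t) ^ 2 + (b t) ^ 2)))
    (hV : ∀ t, V t = -γ * (2 * b t / (1 + (a t) ^ 2 + (b t) ^ 2)))
    (hW : ∀ t, W t = γ * ((1 - ((a t) ^ 2 + (b t) ^ 2)) / (1 + (a t) ^ 2 + (b t) ^ 2))) :
    (Differentiable ℝ U ∧ Differentiable ℝ V ∧ Differentiable ℝ W) ∧
    ∀ t,
      deriv U t = V t * wz t - W t * wy t ∧
      deriv V t = W t * wx t - U t * wz t ∧
      deriv W t = U t * wy t - V t * wx t := by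
  have hDne : ∀ t, 1 + (a t) ^ 2 + (b t) ^ 2 ≠ 0 := fun t => by positivity
  have hUf : U = fun t => -γ * (2 * a t / (1 + (a t) ^ 2 + (b t) ^ 2)) := funext hU
  have hVf : V = fun t => -γ * (2 * b t / (1 + (a t) ^ 2 + (b t) ^ 2)) := funext hV
  have hWf : W = fun t => γ * ((1 - ((a t) ^ 2 + (b t) ^ 2)) / (1 + (a t) ^ 2 + (b t) ^ 2)) :=
    funext hW
  -- HasDerivAt facts at each point
  have key : ∀ t,
      HasDerivAt U (-γ * ((2 * deriv a t * (1 + (a t) ^ 2 + (b t) ^ 2)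
        - 2 * a t * (2 * a t * deriv a t + 2 * b t * deriv b t))
        / (1 + (a t) ^ 2 + (b t) ^ 2) ^ 2)) t ∧
      HasDerivAt V (-γ * ((2 * deriv b t * (1 + (a t) ^ 2 + (b t) ^ 2)
        - 2 * b t * (2 * a t * deriv a t + 2 * b t * deriv b t))
        / (1 + (a t) ^ 2 + (b t) ^ 2) ^ 2)) t ∧
      HasDerivAt W (γ * ((-(2 * a t * deriv a t + 2 * b t * deriv b t)
          * (1 + (a t) ^ 2 + (b t) ^ 2)
        - (1 - ((a t) ^ 2 + (b t) ^ 2)) * (2 * a t * deriv a t + 2 * b t * deriv b t))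
        / (1 + (a t) ^ 2 + (b t) ^ 2) ^ 2)) t := by
    intro t
    have hat : HasDerivAt a (deriv a t) t := (ha t).hasDerivAt
    have hbt : HasDerivAt b (deriv b t) t := (hb t).hasDerivAt
    have hden : HasDerivAt (fun t => 1 + (a t) ^ 2 + (b t) ^ 2)
        (2 * a t * deriv a t + 2 * b t * deriv b t) t := by
      have h1 := hat.fun_pow 2
      have h2 := hbt.fun_pow 2
      have := ((hasDerivAt_const t (1:ℝ)).fun_add h1).fun_add h2
      convert this using 1
      · rfl
      · rfl
      norm_num
    refine ⟨?_, ?_, ?_⟩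
    · rw [hUf]
      exact ((hat.const_mul 2).div hden (hDne t)).const_mul (-γ)
    · rw [hVf]
      exact ((hbt.const_mul 2).div hden (hDne t)).const_mul (-γ)
    · rw [hWf]
      have hnum : HasDerivAt (fun t => 1 - ((a t) ^ 2 + (b t) ^ 2))
          (-(2 * a t * deriv a t + 2 * b t * deriv b t)) t := by
        have h1 := hat.fun_pow 2
        have h2 := hbt.fun_pow 2
        have := (hasDerivAt_const t (1:ℝ)).fun_sub (h1.fun_add h2)
        convert this using 1
        · rfl
        · rfl
        norm_num
      exact (hnum.div hden (hDne t)).const_mul γ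
  refine ⟨⟨fun t => ((key t).1).differentiableAt,
          fun t => ((key t).2.1).differentiableAt,
          fun t => ((key t).2.2).differentiableAt⟩, ?_⟩
  intro t
  obtain ⟨hU', hV', hW'⟩ := key t
  obtain ⟨hda, hdb⟩ := hsys t
  rw [hU'.deriv, hV'.deriv, hW'.deriv, hU t, hV t, hW t, hda, hdb]
  refine ⟨?_, ?_, ?_⟩ <;> field_simp <;> ring
end

section
/- Let ρ > 0 and ν be real constants, and let u_p, u_w : ℝ × ℝ³ → ℝ³, p, φ : ℝ × ℝ³ → ℝ be twice continuously differentiable. Write u = u_p + u_w, let w = ∇ × u denote the spatial curl of u, let ∇ denote the spatial gradient, ∇² the sum of the three second spatial partial derivatives applied componentwise, and (u·∇)u the vector with i-th component u₁·∂uᵢ/∂x + u₂·∂uᵢ/∂y + u₃·∂uᵢ/∂z. Assume that at every point (t, x, y, z): (i) ∇ × u_p = 0 and ∇·u_p = 0 and ∇·u_w = 0; (ii) (1/2)·∇(|u|²) + ∇p/ρ + ∇φ = 0; (iii) ∂u_p/∂t = u_p × w + u_w × w; (iv) ∂u_w/∂t = ν·∇²u_w. Then u satisfies at every point the incompressible Navier–Stokes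 momentum equation ∂u/∂t + (u·∇)u = −∇p/ρ + ν·∇²u − ∇φ, together with the continuity equation ∇·u = 0. -/
/-- Partial derivative with respect to time of a function of `(t, x, y, z)`. -/
noncomputable def pT (f : ℝ → ℝ → ℝ → ℝ → ℝ) (t x y z : ℝ) : ℝ :=
  deriv (fun s => f s x y z) t

/-- Partial derivative with respect to `x`. -/
noncomputable def pX (f : ℝ → ℝ → ℝ → ℝ → ℝ) (t x y z : ℝ) : ℝ :=
  deriv (fun x' => f t x' y z) x

/-- Partial derivative with respect to `y`. -/
noncomputable def pY (f : ℝ → ℝ → ℝ → ℝ → ℝ) (t x y z : ℝ) : ℝ :=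
  deriv (fun y' => f t x y' z) y

/-- Partial derivative with respect to `z`. -/
noncomputable def pZ (f : ℝ → ℝ → ℝ → ℝ → ℝ) (t x y z : ℝ) : ℝ :=
  deriv (fun z' => f t x y z') z

/-- Spatial Laplacian `∂²f/∂x² + ∂²f/∂y² + ∂²f/∂z²`. -/
noncomputable def lap (f : ℝ → ℝ → ℝ → ℝ → ℝ) (t x y z : ℝ) : ℝ :=
  deriv (deriv (fun x' => f t x' y z)) x
    + deriv (deriv (fun y' => f t x y' z)) y
    + deriv (deriv (fun z' => f t x y z')) z

/-- `f` is `C²` as a function of `(t, x, y, z)` jointly. -/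
def IsC2 (f : ℝ → ℝ → ℝ → ℝ → ℝ) : Prop :=
  ContDiff ℝ 2 (fun q : ℝ × ℝ × ℝ × ℝ => f q.1 q.2.1 q.2.2.1 q.2.2.2)

namespace NSdecomp

abbrev Q4 := ℝ × ℝ × ℝ × ℝ

def Fn (f : ℝ → ℝ → ℝ → ℝ → ℝ) : Q4 → ℝ := fun q => f q.1 q.2.1 q.2.2.1 q.2.2.2

def eT : Q4 := (1,0,0,0)
def eX : Q4 := (0,1,0,0)
def eY : Q4 := (0,0,1,0)
def eZ : Q4 := (0,0,0,1)

lemma isC2_iff (f : ℝ → ℝ → ℝ → ℝ → ℝ) : IsC2 f ↔ ContDiff ℝ 2 (Fn f) := Iff.rfl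

lemma lineT (x y z t : ℝ) : HasDerivAt (fun s => ((s, x, y, z) : Q4)) eT t :=
  (hasDerivAt_id t).prodMk (hasDerivAt_const t ((x, y, z) : ℝ × ℝ × ℝ))

lemma lineX (t y z x : ℝ) : HasDerivAt (fun x' => ((t, x', y, z) : Q4)) eX x :=
  (hasDerivAt_const x t).prodMk
    ((hasDerivAt_id x).prodMk (hasDerivAt_const x ((y, z) : ℝ × ℝ)))

lemma lineY (t x z y : ℝ) : HasDerivAt (fun y' => ((t, x, y', z) : Q4)) eY y :=
  (hasDerivAt_const y t).prodMk
    ((hasDerivAt_const y x).prodMk ((hasDerivAt_id y).prodMk (hasDerivAt_const y z)))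

lemma lineZ (t x y z : ℝ) : HasDerivAt (fun z' => ((t, x, y, z') : Q4)) eZ z :=
  (hasDerivAt_const z t).prodMk
    ((hasDerivAt_const z x).prodMk ((hasDerivAt_const z y).prodMk (hasDerivAt_id z)))

lemma comp_line {f : ℝ → ℝ → ℝ → ℝ → ℝ} (hf : Differentiable ℝ (Fn f))
    {g : ℝ → Q4} {v : Q4} {s : ℝ} (hg : HasDerivAt g v s) :
    HasDerivAt (fun s' => Fn f (g s')) (fderiv ℝ (Fn f) (g s) v) s :=
  (hf (g s)).hasFDerivAt.comp_hasDerivAt s hg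

lemma diffOf {f : ℝ → ℝ → ℝ → ℝ → ℝ} (hf : IsC2 f) : Differentiable ℝ (Fn f) :=
  hf.differentiable two_ne_zero

lemma hasDerivAt_pT {f} (hf : Differentiable ℝ (Fn f)) (t x y z : ℝ) :
    HasDerivAt (fun s => f s x y z) (pT f t x y z) t :=
  ((comp_line hf (lineT x y z t)).differentiableAt).hasDerivAt

lemma hasDerivAt_pX {f} (hf : Differentiable ℝ (Fn f)) (t x y z : ℝ) :
    HasDerivAt (fun x' => f t x' y z) (pX f t x y z) x :=
  ((comp_line hf (lineX t y z x)).differentiableAt).hasDerivAt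

lemma hasDerivAt_pY {f} (hf : Differentiable ℝ (Fn f)) (t x y z : ℝ) :
    HasDerivAt (fun y' => f t x y' z) (pY f t x y z) y :=
  ((comp_line hf (lineY t x z y)).differentiableAt).hasDerivAt

lemma hasDerivAt_pZ {f} (hf : Differentiable ℝ (Fn f)) (t x y z : ℝ) :
    HasDerivAt (fun z' => f t x y z') (pZ f t x y z) z :=
  ((comp_line hf (lineZ t x y z)).differentiableAt).hasDerivAt

lemma pT_eq {f} (hf : Differentiable ℝ (Fn f)) (t x y z : ℝ) :
    pT f t x y z = fderiv ℝ (Fn f) (t, x, y, z) eT :=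
  (comp_line hf (lineT x y z t)).deriv

lemma pX_eq {f} (hf : Differentiable ℝ (Fn f)) (t x y z : ℝ) :
    pX f t x y z = fderiv ℝ (Fn f) (t, x, y, z) eX :=
  (comp_line hf (lineX t y z x)).deriv

lemma pY_eq {f} (hf : Differentiable ℝ (Fn f)) (t x y z : ℝ) :
    pY f t x y z = fderiv ℝ (Fn f) (t, x, y, z) eY :=
  (comp_line hf (lineY t x z y)).deriv

lemma pZ_eq {f} (hf : Differentiable ℝ (Fn f)) (t x y z : ℝ) :
    pZ f t x y z = fderiv ℝ (Fn f) (t, x, y, z) eZ :=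
  (comp_line hf (lineZ t x y z)).deriv


noncomputable def Gv (f : ℝ → ℝ → ℝ → ℝ → ℝ) (v : Q4) : Q4 → ℝ :=
  fun q => fderiv ℝ (Fn f) q v

/-- second fderiv abbreviation -/
noncomputable def H2 (f : ℝ → ℝ → ℝ → ℝ → ℝ) (q : Q4) : Q4 →L[ℝ] Q4 →L[ℝ] ℝ :=
  fderiv ℝ (fderiv ℝ (Fn f)) q

lemma hasFDerivAt_fderiv {f} (hf : IsC2 f) (q : Q4) :
    HasFDerivAt (fderiv ℝ (Fn f)) (H2 f q) q :=
  (((hf.fderiv_right (m := 1) (by norm_num)).differentiable one_ne_zero) q).hasFDerivAt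

lemma hasFDerivAt_Gv {f} (hf : IsC2 f) (v : Q4) (q : Q4) :
    HasFDerivAt (Gv f v)
      ((ContinuousLinearMap.apply ℝ ℝ v).comp (H2 f q)) q :=
  ((ContinuousLinearMap.apply ℝ ℝ v).hasFDerivAt).comp q (hasFDerivAt_fderiv hf q)

lemma H2_symm {f} (hf : IsC2 f) (q v w) :
    H2 f q v w = H2 f q w v :=
  second_derivative_symmetric (fun y => (diffOf hf y).hasFDerivAt)
    (hasFDerivAt_fderiv hf q) v w

lemma differentiable_Gv {f} (hf : IsC2 f) (v : Q4) : Differentiable ℝ (Gv f v) :=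
  fun q => (hasFDerivAt_Gv hf v q).differentiableAt

/-- If two first-order directional derivatives agree everywhere, so do the
corresponding slices of the second derivative. -/
lemma Gv_congr {f g} (hf : IsC2 f) (hg : IsC2 g) {v w : Q4}
    (h : ∀ q, Gv f v q = Gv g w q) (q a : Q4) :
    H2 f q a v = H2 g q a w := by
  have h1 := hasFDerivAt_Gv hf v q
  have h2 : HasFDerivAt (Gv f v) ((ContinuousLinearMap.apply ℝ ℝ w).comp (H2 g q)) q :=
    (hasFDerivAt_Gv hg w q).congr_of_eventuallyEq (Filter.Eventually.of_forall h)
  have := h1.unique h2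
  have := DFunLike.congr_fun this a
  simpa using this

/-- second derivative slice vanishing from a pointwise divergence-type identity -/
lemma div_second_zero {f1 f2 f3} (h1 : IsC2 f1) (h2 : IsC2 f2) (h3 : IsC2 f3)
    (hdiv : ∀ t x y z : ℝ, pX f1 t x y z + pY f2 t x y z + pZ f3 t x y z = 0)
    (q a : Q4) :
    H2 f1 q a eX + H2 f2 q a eY + H2 f3 q a eZ = 0 := by
  have hz : (fun q' => Gv f1 eX q' + Gv f2 eY q' + Gv f3 eZ q') = fun _ => (0 : ℝ) := by
    funext q'
    have := hdiv q'.1 q'.2.1 q'.2.2.1 q'.2.2.2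
    rw [pX_eq (diffOf h1), pY_eq (diffOf h2), pZ_eq (diffOf h3)] at this
    exact this
  have hs := ((hasFDerivAt_Gv h1 eX q).add (hasFDerivAt_Gv h2 eY q)).add
    (hasFDerivAt_Gv h3 eZ q)
  have hs' : HasFDerivAt (fun _ : Q4 => (0 : ℝ))
      (((ContinuousLinearMap.apply ℝ ℝ eX).comp (H2 f1 q)
          + (ContinuousLinearMap.apply ℝ ℝ eY).comp (H2 f2 q))
        + (ContinuousLinearMap.apply ℝ ℝ eZ).comp (H2 f3 q)) q := by
    refine hs.congr_of_eventuallyEq (Filter.Eventually.of_forall fun q' => ?_)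
    exact (congrFun hz q').symm
  have := hs'.unique (hasFDerivAt_const 0 q)
  have := DFunLike.congr_fun this a
  simpa using this


lemma hasDerivAt_Gv_X {f} (hf : IsC2 f) (v : Q4) (t x y z : ℝ) :
    HasDerivAt (fun x' => Gv f v (t, x', y, z)) (H2 f (t, x, y, z) eX v) x := by
  have h := (hasFDerivAt_Gv hf v (t, x, y, z)).comp_hasDerivAt x (lineX t y z x)
  simpa [Function.comp_def] using h

lemma hasDerivAt_Gv_Y {f} (hf : IsC2 f) (v : Q4) (t x y z : ℝ) :
    HasDerivAt (fun y' => Gv f v (t, x, y', z)) (H2 f (t, x, y, z) eY v) y := by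
  have h := (hasFDerivAt_Gv hf v (t, x, y, z)).comp_hasDerivAt y (lineY t x z y)
  simpa [Function.comp_def] using h

lemma hasDerivAt_Gv_Z {f} (hf : IsC2 f) (v : Q4) (t x y z : ℝ) :
    HasDerivAt (fun z' => Gv f v (t, x, y, z')) (H2 f (t, x, y, z) eZ v) z := by
  have h := (hasFDerivAt_Gv hf v (t, x, y, z)).comp_hasDerivAt z (lineZ t x y z)
  simpa [Function.comp_def] using h

lemma deriv_slice_X {f} (hf : IsC2 f) (t y z : ℝ) :
    deriv (fun x' => f t x' y z) = fun x' => Gv f eX (t, x', y, z) :=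
  funext fun x' => pX_eq (diffOf hf) t x' y z

lemma deriv_slice_Y {f} (hf : IsC2 f) (t x z : ℝ) :
    deriv (fun y' => f t x y' z) = fun y' => Gv f eY (t, x, y', z) :=
  funext fun y' => pY_eq (diffOf hf) t x y' z

lemma deriv_slice_Z {f} (hf : IsC2 f) (t x y : ℝ) :
    deriv (fun z' => f t x y z') = fun z' => Gv f eZ (t, x, y, z') :=
  funext fun z' => pZ_eq (diffOf hf) t x y z'

lemma lap_rep {f} (hf : IsC2 f) (t x y z : ℝ) :
    lap f t x y z = H2 f (t, x, y, z) eX eX + H2 f (t, x, y, z) eY eY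
      + H2 f (t, x, y, z) eZ eZ := by
  unfold lap
  rw [deriv_slice_X hf, deriv_slice_Y hf, deriv_slice_Z hf,
    (hasDerivAt_Gv_X hf eX t x y z).deriv, (hasDerivAt_Gv_Y hf eY t x y z).deriv,
    (hasDerivAt_Gv_Z hf eZ t x y z).deriv]

lemma pT_add {f g h} (hf : IsC2 f) (hg : IsC2 g)
    (hfg : ∀ t x y z : ℝ, h t x y z = f t x y z + g t x y z) (t x y z : ℝ) :
    pT h t x y z = pT f t x y z + pT g t x y z := by
  unfold pT
  rw [show (fun s => h s x y z) = fun s => f s x y z + g s x y z from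
    funext fun s => hfg s x y z]
  exact ((hasDerivAt_pT (diffOf hf) t x y z).add (hasDerivAt_pT (diffOf hg) t x y z)).deriv

lemma pX_add {f g h} (hf : IsC2 f) (hg : IsC2 g)
    (hfg : ∀ t x y z : ℝ, h t x y z = f t x y z + g t x y z) (t x y z : ℝ) :
    pX h t x y z = pX f t x y z + pX g t x y z := by
  unfold pX
  rw [show (fun x' => h t x' y z) = fun x' => f t x' y z + g t x' y z from
    funext fun x' => hfg t x' y z]
  exact ((hasDerivAt_pX (diffOf hf) t x y z).add (hasDerivAt_pX (diffOf hg) t x y z)).deriv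

lemma pY_add {f g h} (hf : IsC2 f) (hg : IsC2 g)
    (hfg : ∀ t x y z : ℝ, h t x y z = f t x y z + g t x y z) (t x y z : ℝ) :
    pY h t x y z = pY f t x y z + pY g t x y z := by
  unfold pY
  rw [show (fun y' => h t x y' z) = fun y' => f t x y' z + g t x y' z from
    funext fun y' => hfg t x y' z]
  exact ((hasDerivAt_pY (diffOf hf) t x y z).add (hasDerivAt_pY (diffOf hg) t x y z)).deriv

lemma pZ_add {f g h} (hf : IsC2 f) (hg : IsC2 g)
    (hfg : ∀ t x y z : ℝ, h t x y z = f t x y z + g t x y z) (t x y z : ℝ) :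
    pZ h t x y z = pZ f t x y z + pZ g t x y z := by
  unfold pZ
  rw [show (fun z' => h t x y z') = fun z' => f t x y z' + g t x y z' from
    funext fun z' => hfg t x y z']
  exact ((hasDerivAt_pZ (diffOf hf) t x y z).add (hasDerivAt_pZ (diffOf hg) t x y z)).deriv

lemma lap_add {f g h} (hf : IsC2 f) (hg : IsC2 g)
    (hfg : ∀ t x y z : ℝ, h t x y z = f t x y z + g t x y z) (t x y z : ℝ) :
    lap h t x y z = lap f t x y z + lap g t x y z := by
  have eX' : deriv (fun x' => h t x' y z)
      = fun x' => Gv f eX (t, x', y, z) + Gv g eX (t, x', y, z) := by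
    funext x'
    rw [show (fun x'' => h t x'' y z) = fun x'' => f t x'' y z + g t x'' y z from
      funext fun x'' => hfg t x'' y z,
      ((hasDerivAt_pX (diffOf hf) t x' y z).fun_add (hasDerivAt_pX (diffOf hg) t x' y z)).deriv,
      pX_eq (diffOf hf), pX_eq (diffOf hg)]
    rfl
  have eY' : deriv (fun y' => h t x y' z)
      = fun y' => Gv f eY (t, x, y', z) + Gv g eY (t, x, y', z) := by
    funext y'
    rw [show (fun y'' => h t x y'' z) = fun y'' => f t x y'' z + g t x y'' z from
      funext fun y'' => hfg t x y'' z,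
      ((hasDerivAt_pY (diffOf hf) t x y' z).fun_add (hasDerivAt_pY (diffOf hg) t x y' z)).deriv,
      pY_eq (diffOf hf), pY_eq (diffOf hg)]
    rfl
  have eZ' : deriv (fun z' => h t x y z')
      = fun z' => Gv f eZ (t, x, y, z') + Gv g eZ (t, x, y, z') := by
    funext z'
    rw [show (fun z'' => h t x y z'') = fun z'' => f t x y z'' + g t x y z'' from
      funext fun z'' => hfg t x y z'',
      ((hasDerivAt_pZ (diffOf hf) t x y z').fun_add (hasDerivAt_pZ (diffOf hg) t x y z')).deriv,
      pZ_eq (diffOf hf), pZ_eq (diffOf hg)]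
    rfl
  rw [lap_rep hf t x y z, lap_rep hg t x y z]
  unfold lap
  rw [eX', eY', eZ',
    ((hasDerivAt_Gv_X hf eX t x y z).fun_add (hasDerivAt_Gv_X hg eX t x y z)).deriv,
    ((hasDerivAt_Gv_Y hf eY t x y z).fun_add (hasDerivAt_Gv_Y hg eY t x y z)).deriv,
    ((hasDerivAt_Gv_Z hf eZ t x y z).fun_add (hasDerivAt_Gv_Z hg eZ t x y z)).deriv]
  ring


lemma Gv_eX {f} (hf : Differentiable ℝ (Fn f)) (q : Q4) :
    Gv f eX q = pX f q.1 q.2.1 q.2.2.1 q.2.2.2 :=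
  (pX_eq hf q.1 q.2.1 q.2.2.1 q.2.2.2).symm

lemma Gv_eY {f} (hf : Differentiable ℝ (Fn f)) (q : Q4) :
    Gv f eY q = pY f q.1 q.2.1 q.2.2.1 q.2.2.2 :=
  (pY_eq hf q.1 q.2.1 q.2.2.1 q.2.2.2).symm

lemma Gv_eZ {f} (hf : Differentiable ℝ (Fn f)) (q : Q4) :
    Gv f eZ q = pZ f q.1 q.2.1 q.2.2.1 q.2.2.2 :=
  (pZ_eq hf q.1 q.2.1 q.2.2.1 q.2.2.2).symm

section Potential

variable {p1 p2 p3 : ℝ → ℝ → ℝ → ℝ → ℝ} (h1 : IsC2 p1) (h2 : IsC2 p2) (h3 : IsC2 p3)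
  (c1 : ∀ t x y z : ℝ, pY p3 t x y z - pZ p2 t x y z = 0)
  (c2 : ∀ t x y z : ℝ, pZ p1 t x y z - pX p3 t x y z = 0)
  (c3 : ∀ t x y z : ℝ, pX p2 t x y z - pY p1 t x y z = 0)
  (hdiv : ∀ t x y z : ℝ, pX p1 t x y z + pY p2 t x y z + pZ p3 t x y z = 0)

include h1 h2 h3 hdiv

include c2 c3 in
lemma lap_pot₁ (t x y z : ℝ) : lap p1 t x y z = 0 := by
  rw [lap_rep h1]
  set q : Q4 := (t, x, y, z)
  have gY : ∀ q' : Q4, Gv p1 eY q' = Gv p2 eX q' := fun q' => by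
    rw [Gv_eY (diffOf h1), Gv_eX (diffOf h2)]
    have := c3 q'.1 q'.2.1 q'.2.2.1 q'.2.2.2; linarith
  have gZ : ∀ q' : Q4, Gv p1 eZ q' = Gv p3 eX q' := fun q' => by
    rw [Gv_eZ (diffOf h1), Gv_eX (diffOf h3)]
    have := c2 q'.1 q'.2.1 q'.2.2.1 q'.2.2.2; linarith
  have hYY : H2 p1 q eY eY = H2 p2 q eX eY :=
    (Gv_congr h1 h2 gY q eY).trans (H2_symm h2 q eY eX)
  have hZZ : H2 p1 q eZ eZ = H2 p3 q eX eZ :=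
    (Gv_congr h1 h3 gZ q eZ).trans (H2_symm h3 q eZ eX)
  have hsum := div_second_zero h1 h2 h3 hdiv q eX
  linarith

include c1 c3 in
lemma lap_pot₂ (t x y z : ℝ) : lap p2 t x y z = 0 := by
  rw [lap_rep h2]
  set q : Q4 := (t, x, y, z)
  have gX : ∀ q' : Q4, Gv p2 eX q' = Gv p1 eY q' := fun q' => by
    rw [Gv_eY (diffOf h1), Gv_eX (diffOf h2)]
    have := c3 q'.1 q'.2.1 q'.2.2.1 q'.2.2.2; linarith
  have gZ : ∀ q' : Q4, Gv p2 eZ q' = Gv p3 eY q' := fun q' => by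
    rw [Gv_eZ (diffOf h2), Gv_eY (diffOf h3)]
    have := c1 q'.1 q'.2.1 q'.2.2.1 q'.2.2.2; linarith
  have hXX : H2 p2 q eX eX = H2 p1 q eY eX :=
    (Gv_congr h2 h1 gX q eX).trans (H2_symm h1 q eX eY)
  have hZZ : H2 p2 q eZ eZ = H2 p3 q eY eZ :=
    (Gv_congr h2 h3 gZ q eZ).trans (H2_symm h3 q eZ eY)
  have hsum := div_second_zero h1 h2 h3 hdiv q eY
  linarith

include c1 c2 in
lemma lap_pot₃ (t x y z : ℝ) : lap p3 t x y z = 0 := by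
  rw [lap_rep h3]
  set q : Q4 := (t, x, y, z)
  have gX : ∀ q' : Q4, Gv p3 eX q' = Gv p1 eZ q' := fun q' => by
    rw [Gv_eZ (diffOf h1), Gv_eX (diffOf h3)]
    have := c2 q'.1 q'.2.1 q'.2.2.1 q'.2.2.2; linarith
  have gY : ∀ q' : Q4, Gv p3 eY q' = Gv p2 eZ q' := fun q' => by
    rw [Gv_eY (diffOf h3), Gv_eZ (diffOf h2)]
    have := c1 q'.1 q'.2.1 q'.2.2.1 q'.2.2.2; linarith
  have hXX : H2 p3 q eX eX = H2 p1 q eZ eX :=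
    (Gv_congr h3 h1 gX q eX).trans (H2_symm h1 q eX eZ)
  have hYY : H2 p3 q eY eY = H2 p2 q eZ eY :=
    (Gv_congr h3 h2 gY q eY).trans (H2_symm h2 q eY eZ)
  have hsum := div_second_zero h1 h2 h3 hdiv q eZ
  linarith

end Potential

end NSdecomp

open NSdecomp in
/-- The decomposition (1.3)–(1.5): if `u_p` is curl-free and divergence-free, `u_w` is
divergence-free, the Bernoulli-type equation (1.3), the rotation equation (1.4) (with
`f = u_w × w`) and the diffusion equation (1.5) hold, then `u = u_p + u_w` solves the
incompressible Navier–Stokes momentum equation with potential force `F = −∇φ`,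
together with the continuity equation `∇·u = 0`. -/
theorem decomposition_solves_navier_stokes
    (ρ ν : ℝ) (hρ : 0 < ρ)
    (up₁ up₂ up₃ uw₁ uw₂ uw₃ P φ : ℝ → ℝ → ℝ → ℝ → ℝ)
    (hup₁ : IsC2 up₁) (hup₂ : IsC2 up₂) (hup₃ : IsC2 up₃)
    (huw₁ : IsC2 uw₁) (huw₂ : IsC2 uw₂) (huw₃ : IsC2 uw₃)
    (hP : IsC2 P) (hφ : IsC2 φ)
    -- the total velocity `u = u_p + u_w`
    (u₁ u₂ u₃ : ℝ → ℝ → ℝ → ℝ → ℝ)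
    (hu₁ : ∀ t x y z : ℝ, u₁ t x y z = up₁ t x y z + uw₁ t x y z)
    (hu₂ : ∀ t x y z : ℝ, u₂ t x y z = up₂ t x y z + uw₂ t x y z)
    (hu₃ : ∀ t x y z : ℝ, u₃ t x y z = up₃ t x y z + uw₃ t x y z)
    -- the vorticity `w = ∇ × u`
    (w₁ w₂ w₃ : ℝ → ℝ → ℝ → ℝ → ℝ)
    (hw₁ : ∀ t x y z : ℝ, w₁ t x y z = pY u₃ t x y z - pZ u₂ t x y z)
    (hw₂ : ∀ t x y z : ℝ, w₂ t x y z = pZ u₁ t x y z - pX u₃ t x y z)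
    (hw₃ : ∀ t x y z : ℝ, w₃ t x y z = pX u₂ t x y z - pY u₁ t x y z)
    -- (i) `∇ × u_p = 0`, `∇ · u_p = 0`, `∇ · u_w = 0`
    (hcurlp₁ : ∀ t x y z : ℝ, pY up₃ t x y z - pZ up₂ t x y z = 0)
    (hcurlp₂ : ∀ t x y z : ℝ, pZ up₁ t x y z - pX up₃ t x y z = 0)
    (hcurlp₃ : ∀ t x y z : ℝ, pX up₂ t x y z - pY up₁ t x y z = 0)
    (hdivp : ∀ t x y z : ℝ,
      pX up₁ t x y z + pY up₂ t x y z + pZ up₃ t x y z = 0)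
    (hdivw : ∀ t x y z : ℝ,
      pX uw₁ t x y z + pY uw₂ t x y z + pZ uw₃ t x y z = 0)
    -- (ii) `(1/2)·∇(|u|²) + ∇p/ρ + ∇φ = 0`
    (hbern₁ : ∀ t x y z : ℝ,
      (1 / 2) * pX (fun t x y z =>
          (u₁ t x y z) ^ 2 + (u₂ t x y z) ^ 2 + (u₃ t x y z) ^ 2) t x y z
        + pX P t x y z / ρ + pX φ t x y z = 0)
    (hbern₂ : ∀ t x y z : ℝ,
      (1 / 2) * pY (fun t x y z =>
          (u₁ t x y z) ^ 2 + (u₂ t x y z) ^ 2 + (u₃ t x y z) ^ 2) t x y z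
        + pY P t x y z / ρ + pY φ t x y z = 0)
    (hbern₃ : ∀ t x y z : ℝ,
      (1 / 2) * pZ (fun t x y z =>
          (u₁ t x y z) ^ 2 + (u₂ t x y z) ^ 2 + (u₃ t x y z) ^ 2) t x y z
        + pZ P t x y z / ρ + pZ φ t x y z = 0)
    -- (iii) `∂u_p/∂t = u_p × w + u_w × w`
    (hrot₁ : ∀ t x y z : ℝ,
      pT up₁ t x y z =
        (up₂ t x y z * w₃ t x y z - up₃ t x y z * w₂ t x y z)
          + (uw₂ t x y z * w₃ t x y z - uw₃ t x y z * w₂ t x y z))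
    (hrot₂ : ∀ t x y z : ℝ,
      pT up₂ t x y z =
        (up₃ t x y z * w₁ t x y z - up₁ t x y z * w₃ t x y z)
          + (uw₃ t x y z * w₁ t x y z - uw₁ t x y z * w₃ t x y z))
    (hrot₃ : ∀ t x y z : ℝ,
      pT up₃ t x y z =
        (up₁ t x y z * w₂ t x y z - up₂ t x y z * w₁ t x y z)
          + (uw₁ t x y z * w₂ t x y z - uw₂ t x y z * w₁ t x y z))
    -- (iv) `∂u_w/∂t = ν·∇²u_w`
    (hdiff₁ : ∀ t x y z : ℝ, pT uw₁ t x y z = ν * lap uw₁ t x y z)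
    (hdiff₂ : ∀ t x y z : ℝ, pT uw₂ t x y z = ν * lap uw₂ t x y z)
    (hdiff₃ : ∀ t x y z : ℝ, pT uw₃ t x y z = ν * lap uw₃ t x y z) :
    (∀ t x y z : ℝ,
      pT u₁ t x y z
          + (u₁ t x y z * pX u₁ t x y z + u₂ t x y z * pY u₁ t x y z
              + u₃ t x y z * pZ u₁ t x y z) =
        -(pX P t x y z / ρ) + ν * lap u₁ t x y z - pX φ t x y z) ∧
    (∀ t x y z : ℝ,
      pT u₂ t x y z
          + (u₁ t x y z * pX u₂ t x y z + u₂ t x y z * pY u₂ t x y z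
              + u₃ t x y z * pZ u₂ t x y z) =
        -(pY P t x y z / ρ) + ν * lap u₂ t x y z - pY φ t x y z) ∧
    (∀ t x y z : ℝ,
      pT u₃ t x y z
          + (u₁ t x y z * pX u₃ t x y z + u₂ t x y z * pY u₃ t x y z
              + u₃ t x y z * pZ u₃ t x y z) =
        -(pZ P t x y z / ρ) + ν * lap u₃ t x y z - pZ φ t x y z) ∧
    (∀ t x y z : ℝ,
      pX u₁ t x y z + pY u₂ t x y z + pZ u₃ t x y z = 0) := by
  have dX1 : ∀ t x y z : ℝ, HasDerivAt (fun x' => u₁ t x' y z) (pX u₁ t x y z) x := by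
    intro t x y z
    rw [show (fun x' => u₁ t x' y z) = fun x' => up₁ t x' y z + uw₁ t x' y z from
      funext fun x' => hu₁ t x' y z, pX_add hup₁ huw₁ hu₁ t x y z]
    exact (hasDerivAt_pX (diffOf hup₁) t x y z).add (hasDerivAt_pX (diffOf huw₁) t x y z)
  have dX2 : ∀ t x y z : ℝ, HasDerivAt (fun x' => u₂ t x' y z) (pX u₂ t x y z) x := by
    intro t x y z
    rw [show (fun x' => u₂ t x' y z) = fun x' => up₂ t x' y z + uw₂ t x' y z from
      funext fun x' => hu₂ t x' y z, pX_add hup₂ huw₂ hu₂ t x y z]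
    exact (hasDerivAt_pX (diffOf hup₂) t x y z).add (hasDerivAt_pX (diffOf huw₂) t x y z)
  have dX3 : ∀ t x y z : ℝ, HasDerivAt (fun x' => u₃ t x' y z) (pX u₃ t x y z) x := by
    intro t x y z
    rw [show (fun x' => u₃ t x' y z) = fun x' => up₃ t x' y z + uw₃ t x' y z from
      funext fun x' => hu₃ t x' y z, pX_add hup₃ huw₃ hu₃ t x y z]
    exact (hasDerivAt_pX (diffOf hup₃) t x y z).add (hasDerivAt_pX (diffOf huw₃) t x y z)
  have dY1 : ∀ t x y z : ℝ, HasDerivAt (fun y' => u₁ t x y' z) (pY u₁ t x y z) y := by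
    intro t x y z
    rw [show (fun y' => u₁ t x y' z) = fun y' => up₁ t x y' z + uw₁ t x y' z from
      funext fun y' => hu₁ t x y' z, pY_add hup₁ huw₁ hu₁ t x y z]
    exact (hasDerivAt_pY (diffOf hup₁) t x y z).add (hasDerivAt_pY (diffOf huw₁) t x y z)
  have dY2 : ∀ t x y z : ℝ, HasDerivAt (fun y' => u₂ t x y' z) (pY u₂ t x y z) y := by
    intro t x y z
    rw [show (fun y' => u₂ t x y' z) = fun y' => up₂ t x y' z + uw₂ t x y' z from
      funext fun y' => hu₂ t x y' z, pY_add hup₂ huw₂ hu₂ t x y z]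
    exact (hasDerivAt_pY (diffOf hup₂) t x y z).add (hasDerivAt_pY (diffOf huw₂) t x y z)
  have dY3 : ∀ t x y z : ℝ, HasDerivAt (fun y' => u₃ t x y' z) (pY u₃ t x y z) y := by
    intro t x y z
    rw [show (fun y' => u₃ t x y' z) = fun y' => up₃ t x y' z + uw₃ t x y' z from
      funext fun y' => hu₃ t x y' z, pY_add hup₃ huw₃ hu₃ t x y z]
    exact (hasDerivAt_pY (diffOf hup₃) t x y z).add (hasDerivAt_pY (diffOf huw₃) t x y z)
  have dZ1 : ∀ t x y z : ℝ, HasDerivAt (fun z' => u₁ t x y z') (pZ u₁ t x y z) z := by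
    intro t x y z
    rw [show (fun z' => u₁ t x y z') = fun z' => up₁ t x y z' + uw₁ t x y z' from
      funext fun z' => hu₁ t x y z', pZ_add hup₁ huw₁ hu₁ t x y z]
    exact (hasDerivAt_pZ (diffOf hup₁) t x y z).add (hasDerivAt_pZ (diffOf huw₁) t x y z)
  have dZ2 : ∀ t x y z : ℝ, HasDerivAt (fun z' => u₂ t x y z') (pZ u₂ t x y z) z := by
    intro t x y z
    rw [show (fun z' => u₂ t x y z') = fun z' => up₂ t x y z' + uw₂ t x y z' from
      funext fun z' => hu₂ t x y z', pZ_add hup₂ huw₂ hu₂ t x y z]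
    exact (hasDerivAt_pZ (diffOf hup₂) t x y z).add (hasDerivAt_pZ (diffOf huw₂) t x y z)
  have dZ3 : ∀ t x y z : ℝ, HasDerivAt (fun z' => u₃ t x y z') (pZ u₃ t x y z) z := by
    intro t x y z
    rw [show (fun z' => u₃ t x y z') = fun z' => up₃ t x y z' + uw₃ t x y z' from
      funext fun z' => hu₃ t x y z', pZ_add hup₃ huw₃ hu₃ t x y z]
    exact (hasDerivAt_pZ (diffOf hup₃) t x y z).add (hasDerivAt_pZ (diffOf huw₃) t x y z)
  refine ⟨?_, ?_, ?_, ?_⟩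
  · -- first momentum component
    intro t x y z
    have hsq : pX (fun t x y z =>
        (u₁ t x y z) ^ 2 + (u₂ t x y z) ^ 2 + (u₃ t x y z) ^ 2) t x y z
        = 2 * u₁ t x y z * pX u₁ t x y z + 2 * u₂ t x y z * pX u₂ t x y z
          + 2 * u₃ t x y z * pX u₃ t x y z := by
      have h : HasDerivAt (fun x' => u₁ t x' y z ^ 2 + u₂ t x' y z ^ 2 + u₃ t x' y z ^ 2)
          (2 * u₁ t x y z * pX u₁ t x y z + 2 * u₂ t x y z * pX u₂ t x y z
            + 2 * u₃ t x y z * pX u₃ t x y z) x := by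
        have h' := (((dX1 t x y z).fun_pow 2).fun_add ((dX2 t x y z).fun_pow 2)).fun_add ((dX3 t x y z).fun_pow 2)
        convert h' using 1
        all_goals first | rfl | (push_cast; ring)
      exact h.deriv
    have hbX := hbern₁ t x y z
    rw [hsq, hu₁ t x y z, hu₂ t x y z, hu₃ t x y z] at hbX
    have hpTu : pT u₁ t x y z = pT up₁ t x y z + pT uw₁ t x y z := pT_add hup₁ huw₁ hu₁ t x y z
    have hlapu : lap u₁ t x y z = lap up₁ t x y z + lap uw₁ t x y z :=
      lap_add hup₁ huw₁ hu₁ t x y z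
    have hlp0 : lap up₁ t x y z = 0 :=
      lap_pot₁ hup₁ hup₂ hup₃ hcurlp₂ hcurlp₃ hdivp t x y z
    rw [hpTu, hrot₁ t x y z, hdiff₁ t x y z, hlapu, hlp0, hw₂ t x y z, hw₃ t x y z,
      hu₁ t x y z, hu₂ t x y z, hu₃ t x y z]
    linear_combination hbX
  · -- second momentum component
    intro t x y z
    have hsq : pY (fun t x y z =>
        (u₁ t x y z) ^ 2 + (u₂ t x y z) ^ 2 + (u₃ t x y z) ^ 2) t x y z
        = 2 * u₁ t x y z * pY u₁ t x y z + 2 * u₂ t x y z * pY u₂ t x y z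
          + 2 * u₃ t x y z * pY u₃ t x y z := by
      have h : HasDerivAt (fun y' => u₁ t x y' z ^ 2 + u₂ t x y' z ^ 2 + u₃ t x y' z ^ 2)
          (2 * u₁ t x y z * pY u₁ t x y z + 2 * u₂ t x y z * pY u₂ t x y z
            + 2 * u₃ t x y z * pY u₃ t x y z) y := by
        have h' := (((dY1 t x y z).fun_pow 2).fun_add ((dY2 t x y z).fun_pow 2)).fun_add ((dY3 t x y z).fun_pow 2)
        convert h' using 1
        all_goals first | rfl | (push_cast; ring)
      exact h.deriv
    have hbY := hbern₂ t x y z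
    rw [hsq, hu₁ t x y z, hu₂ t x y z, hu₃ t x y z] at hbY
    have hpTu : pT u₂ t x y z = pT up₂ t x y z + pT uw₂ t x y z := pT_add hup₂ huw₂ hu₂ t x y z
    have hlapu : lap u₂ t x y z = lap up₂ t x y z + lap uw₂ t x y z :=
      lap_add hup₂ huw₂ hu₂ t x y z
    have hlp0 : lap up₂ t x y z = 0 :=
      lap_pot₂ hup₁ hup₂ hup₃ hcurlp₁ hcurlp₃ hdivp t x y z
    rw [hpTu, hrot₂ t x y z, hdiff₂ t x y z, hlapu, hlp0, hw₁ t x y z, hw₃ t x y z,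
      hu₁ t x y z, hu₂ t x y z, hu₃ t x y z]
    linear_combination hbY
  · -- third momentum component
    intro t x y z
    have hsq : pZ (fun t x y z =>
        (u₁ t x y z) ^ 2 + (u₂ t x y z) ^ 2 + (u₃ t x y z) ^ 2) t x y z
        = 2 * u₁ t x y z * pZ u₁ t x y z + 2 * u₂ t x y z * pZ u₂ t x y z
          + 2 * u₃ t x y z * pZ u₃ t x y z := by
      have h : HasDerivAt (fun z' => u₁ t x y z' ^ 2 + u₂ t x y z' ^ 2 + u₃ t x y z' ^ 2)
          (2 * u₁ t x y z * pZ u₁ t x y z + 2 * u₂ t x y z * pZ u₂ t x y z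
            + 2 * u₃ t x y z * pZ u₃ t x y z) z := by
        have h' := (((dZ1 t x y z).fun_pow 2).fun_add ((dZ2 t x y z).fun_pow 2)).fun_add ((dZ3 t x y z).fun_pow 2)
        convert h' using 1
        all_goals first | rfl | (push_cast; ring)
      exact h.deriv
    have hbZ := hbern₃ t x y z
    rw [hsq, hu₁ t x y z, hu₂ t x y z, hu₃ t x y z] at hbZ
    have hpTu : pT u₃ t x y z = pT up₃ t x y z + pT uw₃ t x y z := pT_add hup₃ huw₃ hu₃ t x y z
    have hlapu : lap u₃ t x y z = lap up₃ t x y z + lap uw₃ t x y z :=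
      lap_add hup₃ huw₃ hu₃ t x y z
    have hlp0 : lap up₃ t x y z = 0 :=
      lap_pot₃ hup₁ hup₂ hup₃ hcurlp₁ hcurlp₂ hdivp t x y z
    rw [hpTu, hrot₃ t x y z, hdiff₃ t x y z, hlapu, hlp0, hw₁ t x y z, hw₂ t x y z,
      hu₁ t x y z, hu₂ t x y z, hu₃ t x y z]
    linear_combination hbZ
  · -- continuity equation
    intro t x y z
    rw [pX_add hup₁ huw₁ hu₁ t x y z, pY_add hup₂ huw₂ hu₂ t x y z,
      pZ_add hup₃ huw₃ hu₃ t x y z]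
    linarith [hdivp t x y z, hdivw t x y z]
end
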